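/- arXiv:2408.09475 — 3 statements merged into one kernel-verified Lean document; each statement's English description precedes it below -/
import Mathlib

section
/- Under the same setup (V of dimension 2m with orthonormal basis {e_α, Je_α}, σ the anti-complex-linear part of a linear map u), for any unit vector ν ∈ V one has |σ(ν)|² ≤ |σ|²/2; equivalently, the tensor S_σ := (|σ|²/2)⟨·,·⟩ − σ⊙σ, where (σ⊙σ)(X,Y) = ⟨σ(X), σ(Y)⟩, satisfies S_σ(ν, ν) ≥ 0 for every unit vector ν. -/
theorem stmt_6 {V W : Type*} [NormedAddCommGroup V] [InnerProductSpace ℝ V]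
    [NormedAddCommGroup W] [InnerProductSpace ℝ W] (m : ℕ)
    (J : V →ₗ[ℝ] V) (hJ : ∀ x, J (J x) = -x)
    (hJinv : ∀ x y, (inner ℝ (J x) (J y) : ℝ) = inner ℝ x y)
    (J' : W →ₗ[ℝ] W) (hJ' : ∀ w, J' (J' w) = -w)
    (hJ'inv : ∀ x y, (inner ℝ (J' x) (J' y) : ℝ) = inner ℝ x y)
    (u : V →ₗ[ℝ] W) (σ : V → W)
    (hσ : ∀ X, σ X = (2:ℝ)⁻¹ • (u X + J' (u (J X))))
    (b : OrthonormalBasis (Fin m ⊕ Fin m) ℝ V)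
    (hbJ : ∀ α : Fin m, b (Sum.inr α) = J (b (Sum.inl α))) :
    ∀ ν : V, ‖ν‖ = 1 →
      ‖σ ν‖ ^ 2 ≤ (∑ A : Fin m ⊕ Fin m, ‖σ (b A)‖ ^ 2) / 2 ∧
      0 ≤ (∑ A : Fin m ⊕ Fin m, ‖σ (b A)‖ ^ 2) / 2 * (inner ℝ ν ν : ℝ)
            - (inner ℝ (σ ν) (σ ν) : ℝ) := by
  -- σ as a linear map
  set T : V →ₗ[ℝ] W := (2:ℝ)⁻¹ • (u + J'.comp (u.comp J)) with hT
  have hσT : ∀ x, σ x = T x := by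
    intro x; rw [hσ]; simp [hT]
  -- norms under J'
  have hJ'norm : ∀ w : W, ‖J' w‖ = ‖w‖ := by
    intro w
    have h := hJ'inv w w
    rw [real_inner_self_eq_norm_sq, real_inner_self_eq_norm_sq] at h
    nlinarith [norm_nonneg (J' w), norm_nonneg w]
  -- orthogonality of w and J' w
  have hperp : ∀ w : W, (inner ℝ w (J' w) : ℝ) = 0 := by
    intro w
    have h1 := hJ'inv w (J' w)
    rw [hJ' w] at h1
    have h2 : (inner ℝ (J' w) (-w) : ℝ) = - inner ℝ (J' w) w := by
      simp [inner_neg_right]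
    rw [h2] at h1
    have h3 := real_inner_comm w (J' w)
    linarith
  -- anti-linearity: T (J x) = - J' (T x)
  have hanti : ∀ x, T (J x) = - J' (T x) := by
    intro x
    simp only [hT, LinearMap.smul_apply, LinearMap.add_apply, LinearMap.comp_apply,
      hJ x, map_neg, map_add, map_smul, hJ' (u (J x))]
    module
  intro ν hν
  -- abbreviations
  set c : Fin m ⊕ Fin m → ℝ := fun A => b.repr ν A with hc
  set w : Fin m → W := fun α => T (b (Sum.inl α)) with hw
  have hνsum : ν = ∑ A, c A • b A := (b.sum_repr ν).symm
  -- expansion of σ ν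
  have hσν : σ ν = ∑ α : Fin m, (c (Sum.inl α) • w α - c (Sum.inr α) • J' (w α)) := by
    rw [hσT, hνsum, map_sum, Fintype.sum_sum_type (fun A => T (c A • b A))]
    simp only [hw, map_smul, hbJ, hanti, smul_neg, Finset.sum_neg_distrib]
    rw [Finset.sum_sub_distrib, ← sub_eq_add_neg]
  -- norm of each summand
  have hterm : ∀ α : Fin m, ‖c (Sum.inl α) • w α - c (Sum.inr α) • J' (w α)‖
      = Real.sqrt (c (Sum.inl α) ^ 2 + c (Sum.inr α) ^ 2) * ‖w α‖ := by
    intro α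
    have hsq : ‖c (Sum.inl α) • w α - c (Sum.inr α) • J' (w α)‖ ^ 2
        = (c (Sum.inl α) ^ 2 + c (Sum.inr α) ^ 2) * ‖w α‖ ^ 2 := by
      rw [norm_sub_sq_real]
      rw [norm_smul, norm_smul, inner_smul_left, inner_smul_right, hperp (w α),
        hJ'norm (w α)]
      simp [mul_pow]; ring
    have h1 : 0 ≤ Real.sqrt (c (Sum.inl α) ^ 2 + c (Sum.inr α) ^ 2) * ‖w α‖ :=
      mul_nonneg (Real.sqrt_nonneg _) (norm_nonneg _)
    have h2 : (Real.sqrt (c (Sum.inl α) ^ 2 + c (Sum.inr α) ^ 2) * ‖w α‖) ^ 2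
        = (c (Sum.inl α) ^ 2 + c (Sum.inr α) ^ 2) * ‖w α‖ ^ 2 := by
      rw [mul_pow, Real.sq_sqrt (by positivity)]
    nlinarith [norm_nonneg (c (Sum.inl α) • w α - c (Sum.inr α) • J' (w α))]
  -- triangle inequality
  have htri : ‖σ ν‖ ≤ ∑ α : Fin m, Real.sqrt (c (Sum.inl α) ^ 2 + c (Sum.inr α) ^ 2) * ‖w α‖ := by
    rw [hσν]
    refine (norm_sum_le _ _).trans_eq ?_
    exact Finset.sum_congr rfl fun α _ => hterm α
  -- sum of squared coefficients = 1
  have hcsum : ∑ α : Fin m, (c (Sum.inl α) ^ 2 + c (Sum.inr α) ^ 2) = 1 := by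
    have hinner : (inner ℝ ν ν : ℝ) = ∑ A : Fin m ⊕ Fin m, c A * c A := by
      conv_lhs => rw [hνsum]
      rw [b.orthonormal.inner_sum c c Finset.univ]
      simp
    have h2 : ∑ A : Fin m ⊕ Fin m, c A ^ 2 = 1 := by
      have h3 : (inner ℝ ν ν : ℝ) = 1 := by
        rw [real_inner_self_eq_norm_sq, hν]; norm_num
      rw [h3] at hinner
      rw [hinner]
      exact Finset.sum_congr rfl fun A _ => pow_two (c A)
    rw [← h2, Fintype.sum_sum_type (fun A => c A ^ 2), Finset.sum_add_distrib]
  -- RHS equals sum of ‖w α‖²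
  have hRHS : (∑ A : Fin m ⊕ Fin m, ‖σ (b A)‖ ^ 2) / 2 = ∑ α : Fin m, ‖w α‖ ^ 2 := by
    rw [Fintype.sum_sum_type (fun A => ‖σ (b A)‖ ^ 2)]
    have : ∀ α : Fin m, ‖σ (b (Sum.inr α))‖ = ‖w α‖ := by
      intro α
      rw [hσT, hbJ α, hanti, norm_neg, hJ'norm]
    have h1 : ∑ α : Fin m, ‖σ (b (Sum.inr α))‖ ^ 2 = ∑ α : Fin m, ‖w α‖ ^ 2 :=
      Finset.sum_congr rfl fun α _ => by rw [this α]
    have h2 : ∑ α : Fin m, ‖σ (b (Sum.inl α))‖ ^ 2 = ∑ α : Fin m, ‖w α‖ ^ 2 :=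
      Finset.sum_congr rfl fun α _ => by rw [hσT, hw]
    rw [h1, h2]; ring
  -- Cauchy-Schwarz
  have hCS : (∑ α : Fin m, Real.sqrt (c (Sum.inl α) ^ 2 + c (Sum.inr α) ^ 2) * ‖w α‖) ^ 2
      ≤ ∑ α : Fin m, ‖w α‖ ^ 2 := by
    calc (∑ α : Fin m, Real.sqrt (c (Sum.inl α) ^ 2 + c (Sum.inr α) ^ 2) * ‖w α‖) ^ 2
        ≤ (∑ α : Fin m, Real.sqrt (c (Sum.inl α) ^ 2 + c (Sum.inr α) ^ 2) ^ 2)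
          * ∑ α : Fin m, ‖w α‖ ^ 2 :=
          Finset.sum_mul_sq_le_sq_mul_sq _ _ _
      _ = ∑ α : Fin m, ‖w α‖ ^ 2 := by
          have : ∑ α : Fin m, Real.sqrt (c (Sum.inl α) ^ 2 + c (Sum.inr α) ^ 2) ^ 2 = 1 := by
            rw [← hcsum]
            exact Finset.sum_congr rfl fun α _ => Real.sq_sqrt (by positivity)
          rw [this, one_mul]
  have hmain : ‖σ ν‖ ^ 2 ≤ (∑ A : Fin m ⊕ Fin m, ‖σ (b A)‖ ^ 2) / 2 := by
    rw [hRHS]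
    calc ‖σ ν‖ ^ 2 ≤ (∑ α : Fin m, Real.sqrt (c (Sum.inl α) ^ 2 + c (Sum.inr α) ^ 2) * ‖w α‖) ^ 2 := by
          apply pow_le_pow_left₀ (norm_nonneg _) htri
      _ ≤ ∑ α : Fin m, ‖w α‖ ^ 2 := hCS
  refine ⟨hmain, ?_⟩
  have h1 : (inner ℝ ν ν : ℝ) = 1 := by
    rw [real_inner_self_eq_norm_sq, hν]; norm_num
  have h2 : (inner ℝ (σ ν) (σ ν) : ℝ) = ‖σ ν‖ ^ 2 := real_inner_self_eq_norm_sq _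
  rw [h1, h2, mul_one]
  linarith
end

section
/- Let V be a 2m-dimensional real inner product space with orthogonal complex structure J, let σ : V → W be a linear map into an inner product space W satisfying |σ(JX)| = |σ(X)| for all X, and let H be a symmetric bilinear form on V with eigenvalues λ_1 ≤ ⋯ ≤ λ_{2m}. Define S_σ = (|σ|²/2) g − σ⊙σ where g is the inner product and (σ⊙σ)(X,Y) = ⟨σ(X),σ(Y)⟩. Then ⟨S_σ, H⟩ ≥ (1/2)|σ|² Σ_{α=1}^{m-1}(λ_α + λ_{m+α}); in particular, if |σ|² = 2e then ⟨S_σ, H⟩ ≥ e·Σ_{α=1}^{m-1}(λ_α + λ_{m+α}). -/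
theorem stmt_7 {V W : Type*} [NormedAddCommGroup V] [InnerProductSpace ℝ V]
    [NormedAddCommGroup W] [InnerProductSpace ℝ W] (m : ℕ) (hm : 2 ≤ m)
    (J : V →ₗ[ℝ] V) (hJ : ∀ x, J (J x) = -x)
    (hJinv : ∀ x y, (inner ℝ (J x) (J y) : ℝ) = inner ℝ x y)
    (σ : V →ₗ[ℝ] W) (hσJ : ∀ X, ‖σ (J X)‖ = ‖σ X‖)
    (b : OrthonormalBasis (Fin m ⊕ Fin m) ℝ V)
    (hbJ : ∀ α : Fin m, b (Sum.inr α) = J (b (Sum.inl α)))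
    (H : V →ₗ[ℝ] V →ₗ[ℝ] ℝ) (hHsymm : ∀ x y, H x y = H y x)
    (lam : Fin m ⊕ Fin m → ℝ)
    (hdiag : ∀ i j, H (b i) (b j) = if i = j then lam i else 0)
    (hmono₁ : ∀ α β : Fin m, α ≤ β → lam (Sum.inl α) ≤ lam (Sum.inl β))
    (hmono₂ : ∀ α β : Fin m, α ≤ β → lam (Sum.inr α) ≤ lam (Sum.inr β))
    (hmono₃ : ∀ α β : Fin m, lam (Sum.inl α) ≤ lam (Sum.inr β)) :
    (1 / 2) * (∑ A : Fin m ⊕ Fin m, ‖σ (b A)‖ ^ 2) *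
        (∑ α ∈ Finset.univ.filter (fun α : Fin m => (α : ℕ) < m - 1),
          (lam (Sum.inl α) + lam (Sum.inr α)))
      ≤ ∑ i : Fin m ⊕ Fin m, ∑ j : Fin m ⊕ Fin m,
          ((∑ A : Fin m ⊕ Fin m, ‖σ (b A)‖ ^ 2) / 2 * (inner ℝ (b i) (b j) : ℝ)
            - (inner ℝ (σ (b i)) (σ (b j)) : ℝ)) * H (b i) (b j) := by
  classical
  set s : Fin m → ℝ := fun α => ‖σ (b (Sum.inl α))‖ ^ 2 with hs_def
  have hs : ∀ α : Fin m, ‖σ (b (Sum.inr α))‖ ^ 2 = s α := by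
    intro α; simp [hs_def, hbJ, hσJ]
  have hON : ∀ i j : Fin m ⊕ Fin m, (inner ℝ (b i) (b j) : ℝ) = if i = j then 1 else 0 :=
    orthonormal_iff_ite.mp b.orthonormal
  set T : ℝ := ∑ A : Fin m ⊕ Fin m, ‖σ (b A)‖ ^ 2 with hT_def
  set S : ℝ := ∑ α : Fin m, s α with hS_def
  have hT : T = 2 * S := by
    rw [hT_def, Fintype.sum_sum_type]
    simp only [hs]
    rw [hS_def]; ring
  set μ : Fin m → ℝ := fun α => lam (Sum.inl α) + lam (Sum.inr α) with hμ_def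
  have hRHS : ∑ i : Fin m ⊕ Fin m, ∑ j : Fin m ⊕ Fin m,
      (T / 2 * (inner ℝ (b i) (b j) : ℝ) - (inner ℝ (σ (b i)) (σ (b j)) : ℝ)) * H (b i) (b j)
      = ∑ α : Fin m, (S - s α) * μ α := by
    have hrow : ∀ i : Fin m ⊕ Fin m, ∑ j : Fin m ⊕ Fin m,
        (T / 2 * (inner ℝ (b i) (b j) : ℝ) - (inner ℝ (σ (b i)) (σ (b j)) : ℝ)) * H (b i) (b j)
        = (T / 2 - ‖σ (b i)‖ ^ 2) * lam i := by
      intro i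
      rw [Finset.sum_eq_single i]
      · rw [hdiag, hON, real_inner_self_eq_norm_sq]; simp
      · intro j _ hj; rw [hdiag]; simp [(Ne.symm hj : ¬ i = j)]
      · simp
    simp_rw [hrow]
    rw [Fintype.sum_sum_type]
    have h2 : T / 2 = S := by rw [hT]; ring
    simp only [hs, h2]
    rw [← Finset.sum_add_distrib]
    exact Finset.sum_congr rfl fun α _ => by simp [hμ_def]; ring
  rw [hRHS, hT]
  have h12 : (1 : ℝ) / 2 * (2 * S) = S := by ring
  rw [h12]
  -- split off the last index
  set last : Fin m := ⟨m - 1, by omega⟩ with hlast_def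
  have hsplit : ∀ f : Fin m → ℝ, ∑ α : Fin m, f α
      = (∑ α ∈ Finset.univ.filter (fun α : Fin m => (α : ℕ) < m - 1), f α) + f last := by
    intro f
    have hset : Finset.univ.filter (fun α : Fin m => ¬ ((α : ℕ) < m - 1)) = {last} := by
      ext α
      have := α.isLt
      simp [Fin.ext_iff, hlast_def]
      omega
    rw [← Finset.sum_filter_add_sum_filter_not Finset.univ (fun α : Fin m => (α : ℕ) < m - 1) f,
      hset, Finset.sum_singleton]
  have hSsplit : S = (∑ α ∈ Finset.univ.filter (fun α : Fin m => (α : ℕ) < m - 1), s α) + s last := by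
    rw [hS_def, hsplit]
  rw [hsplit (fun α => (S - s α) * μ α)]
  have key : ∑ α ∈ Finset.univ.filter (fun α : Fin m => (α : ℕ) < m - 1), s α * μ α
      ≤ ∑ α ∈ Finset.univ.filter (fun α : Fin m => (α : ℕ) < m - 1), s α * μ last := by
    apply Finset.sum_le_sum
    intro α hα
    have hle : α ≤ last := by
      have := α.isLt
      simp [Fin.le_def, hlast_def]; omega
    have hμle : μ α ≤ μ last :=
      add_le_add (hmono₁ α last hle) (hmono₂ α last hle)
    exact mul_le_mul_of_nonneg_left hμle (by positivity)
  have expand : ∑ α ∈ Finset.univ.filter (fun α : Fin m => (α : ℕ) < m - 1), (S - s α) * μ α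
      = S * (∑ α ∈ Finset.univ.filter (fun α : Fin m => (α : ℕ) < m - 1), μ α)
        - ∑ α ∈ Finset.univ.filter (fun α : Fin m => (α : ℕ) < m - 1), s α * μ α := by
    rw [Finset.mul_sum, ← Finset.sum_sub_distrib]
    exact Finset.sum_congr rfl fun α _ => by ring
  have hlastterm : (S - s last) * μ last
      = ∑ α ∈ Finset.univ.filter (fun α : Fin m => (α : ℕ) < m - 1), s α * μ last := by
    rw [← Finset.sum_mul]
    have : S - s last = ∑ α ∈ Finset.univ.filter (fun α : Fin m => (α : ℕ) < m - 1), s α := by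
      rw [hSsplit]; ring
    rw [this]
  have goal_eq : ∑ α ∈ Finset.univ.filter (fun α : Fin m => (α : ℕ) < m - 1),
      (lam (Sum.inl α) + lam (Sum.inr α))
      = ∑ α ∈ Finset.univ.filter (fun α : Fin m => (α : ℕ) < m - 1), μ α := rfl
  rw [goal_eq, expand, hlastterm]
  linarith [key]
end

section
/- Let f : (0,∞) → ℝ be a nondecreasing convex C² function and h : (0,∞) → (0,∞). Suppose at some point the symmetric bilinear form H on a 2m-dimensional inner product space satisfies H ≥ f'(r)·h(r)·g + (f''(r) − f'(r)h(r))·(dr ⊗ dr) for a unit covector dr, and let λ_1 ≤ ⋯ ≤ λ_{2m} be the eigenvalues of H. Then Σ_{α=1}^{m-1}(λ_α + λ_{m+α}) ≥ f''(r) + (2m−3) f'(r) h(r) when f'(r)h(r) ≥ f''(r), and Σ_{α=1}^{m-1}(λ_α + λ_{m+α}) ≥ 2(m−1) f'(r) h(r) when f'(r)h(r) < f''(r). -/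
theorem stmt_10 {V : Type*} [NormedAddCommGroup V] [InnerProductSpace ℝ V]
    (m : ℕ) (hm : 2 ≤ m)
    (f f' f'' h : ℝ → ℝ)
    (hf' : ∀ x > (0:ℝ), HasDerivAt f (f' x) x)
    (hf'' : ∀ x > (0:ℝ), HasDerivAt f' (f'' x) x)
    (hfmono : MonotoneOn f (Set.Ioi 0))
    (hfconv : ConvexOn ℝ (Set.Ioi 0) f)
    (hh : ∀ x > (0:ℝ), 0 < h x)
    (r : ℝ) (hr : 0 < r)
    (v : V) (hv : ‖v‖ = 1)
    (H : V →ₗ[ℝ] V →ₗ[ℝ] ℝ) (hHsymm : ∀ x y, H x y = H y x)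
    (hH : ∀ X, f' r * h r * ‖X‖ ^ 2 + (f'' r - f' r * h r) * (inner ℝ v X : ℝ) ^ 2 ≤ H X X)
    (b : OrthonormalBasis (Fin (2 * m)) ℝ V)
    (lam : ℕ → ℝ)
    (hdiag : ∀ i j : Fin (2 * m), H (b i) (b j) = if i = j then lam i else 0)
    (hlam : ∀ i j, i ≤ j → j < 2 * m → lam i ≤ lam j) :
    (f'' r ≤ f' r * h r →
      f'' r + (2 * (m : ℝ) - 3) * f' r * h r
        ≤ ∑ α ∈ Finset.range (m - 1), (lam α + lam (m + α))) ∧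
    (f' r * h r < f'' r →
      2 * ((m : ℝ) - 1) * f' r * h r
        ≤ ∑ α ∈ Finset.range (m - 1), (lam α + lam (m + α))) := by
  classical
  set a := f' r * h r with ha
  set c := f'' r - a with hc
  -- squared inner products
  set q : ℕ → ℝ := fun n => if hn : n < 2 * m then (inner ℝ v (b ⟨n, hn⟩) : ℝ) ^ 2 else 0 with hq
  have hq0 : ∀ n, 0 ≤ q n := by
    intro n
    simp only [hq]
    split <;> positivity
  have hqsum : ∑ n ∈ Finset.range (2 * m), q n = 1 := by
    rw [← Fin.sum_univ_eq_sum_range]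
    have : ∀ i : Fin (2 * m), q i = (inner ℝ v (b i) : ℝ) ^ 2 := by
      intro i; simp only [hq]; rw [dif_pos i.isLt]
    rw [Finset.sum_congr rfl fun i _ => this i]
    have := b.sum_inner_mul_inner v v
    have h2 : ∀ i : Fin (2 * m), (inner ℝ v (b i) : ℝ) * inner ℝ (b i) v = (inner ℝ v (b i) : ℝ) ^ 2 := by
      intro i; rw [real_inner_comm (b i) v]; ring
    rw [Finset.sum_congr rfl fun i _ => (h2 i).symm, this, real_inner_self_eq_norm_sq, hv]
    norm_num
  have key : ∀ n, n < 2 * m → a + c * q n ≤ lam n := by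
    intro n hn
    have hbn : ‖b (⟨n, hn⟩ : Fin (2 * m))‖ = 1 := b.orthonormal.1 _
    have := hH (b ⟨n, hn⟩)
    rw [hbn, hdiag ⟨n, hn⟩ ⟨n, hn⟩, if_pos rfl] at this
    have hqn : q n = (inner ℝ v (b (⟨n, hn⟩ : Fin (2 * m))) : ℝ) ^ 2 := by
      simp only [hq]; rw [dif_pos hn]
    rw [hqn]
    calc a + c * (inner ℝ v (b (⟨n, hn⟩ : Fin (2 * m))) : ℝ) ^ 2
        = f' r * h r * (1:ℝ) ^ 2 + (f'' r - f' r * h r) * (inner ℝ v (b ⟨n, hn⟩) : ℝ) ^ 2 := by ring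
      _ ≤ lam n := by simpa using this
  -- Q α = q α + q (m + α)
  set Q : ℕ → ℝ := fun α => q α + q (m + α) with hQ
  have hQsum : ∑ α ∈ Finset.range m, Q α = 1 := by
    rw [← hqsum, two_mul, Finset.sum_range_add]
    simp [hQ, Finset.sum_add_distrib]
  have hQ0 : ∀ α, 0 ≤ Q α := fun α => add_nonneg (hq0 _) (hq0 _)
  set T := ∑ α ∈ Finset.range (m - 1), Q α with hT
  have hT0 : 0 ≤ T := Finset.sum_nonneg fun α _ => hQ0 α
  have hT1 : T ≤ 1 := by
    rw [hT, ← hQsum]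
    exact Finset.sum_le_sum_of_subset_of_nonneg
      (Finset.range_subset_range.2 (Nat.sub_le m 1)) (fun i _ _ => hQ0 i)
  have main : ((m : ℝ) - 1) * (2 * a) + c * T ≤ ∑ α ∈ Finset.range (m - 1), (lam α + lam (m + α)) := by
    have step : ∀ α ∈ Finset.range (m - 1), 2 * a + c * Q α ≤ lam α + lam (m + α) := by
      intro α hα
      rw [Finset.mem_range] at hα
      have h1 : α < 2 * m := by omega
      have h2 : m + α < 2 * m := by omega
      have := add_le_add (key α h1) (key (m + α) h2)
      calc 2 * a + c * Q α = (a + c * q α) + (a + c * q (m + α)) := by simp [hQ]; ring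
        _ ≤ lam α + lam (m + α) := this
    calc ((m : ℝ) - 1) * (2 * a) + c * T
        = ∑ α ∈ Finset.range (m - 1), (2 * a + c * Q α) := by
          rw [Finset.sum_add_distrib, Finset.sum_const, ← Finset.mul_sum, ← hT]
          have : ((m - 1 : ℕ) : ℝ) = (m : ℝ) - 1 := by
            have : (1:ℕ) ≤ m := by omega
            push_cast [Nat.cast_sub this]; ring
          rw [Finset.card_range, nsmul_eq_mul, this]
      _ ≤ _ := Finset.sum_le_sum step
  constructor
  · intro hcase
    have hcle : c ≤ 0 := by rw [hc]; linarith
    have : c * 1 ≤ c * T := by nlinarith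
    calc f'' r + (2 * (m : ℝ) - 3) * f' r * h r
        = ((m : ℝ) - 1) * (2 * a) + c * 1 := by rw [ha, hc]; ring
      _ ≤ ((m : ℝ) - 1) * (2 * a) + c * T := by linarith
      _ ≤ _ := main
  · intro hcase
    have hcge : 0 ≤ c := by rw [hc]; linarith
    have : 0 ≤ c * T := mul_nonneg hcge hT0
    calc 2 * ((m : ℝ) - 1) * f' r * h r
        = ((m : ℝ) - 1) * (2 * a) := by rw [ha]; ring
      _ ≤ ((m : ℝ) - 1) * (2 * a) + c * T := by linarith
      _ ≤ _ := main
end
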